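/- Let R be a commutative noetherian ring, A a finite R-algebra, and V ⊆ Spec R a specialisation closed subset. For a left A-module M let Γ_V M denote the kernel of the canonical map M → ∏_{p ∉ V} M_p. Then for every injective left A-module I, the submodule Γ_V I is a direct summand of I as an A-module; in particular Γ_V I is an injective A-module. -/

import Mathlib

/-!
STATEMENT 13: for a finite algebra `A` over a commutative noetherian ring `R` and a
specialisation closed subset `V ⊆ Spec R`, the `V`-torsion submodule `Γ_V I` of an
injective left `A`-module `I` is a direct summand of `I`; in particular it is an
injective `A`-module.
-/

open CategoryTheory TensorProduct

noncomputable section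

variable (R : Type) [CommRing R] (A : Type) [Ring A] [Algebra R A]

/-- A subset `V` of the prime spectrum of `R` (realised as a set of ideals, of which
only the prime members matter) is specialisation closed. -/
def SpecializationClosed (V : Set (Ideal R)) : Prop :=
  ∀ p q : Ideal R, p.IsPrime → q.IsPrime → p ≤ q → p ∈ V → q ∈ V

/-- The `V`-torsion submodule `Γ_V M` of a module `M`: the kernel of the canonical map
`M → ∏_{p ∉ V} M_p` into the product of the localisations at primes outside `V`;
an element lies in it iff it maps to zero in every such localisation. -/
def torsionSubmodule (V : Set (Ideal R)) (M : Type) [AddCommGroup M] [Module R M]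
    [Module A M] [IsScalarTower R A M] : Submodule A M where
  carrier := {m | ∀ (p : Ideal R) (hp : p.IsPrime), p ∉ V →
    haveI := hp
    LocalizedModule.mkLinearMap p.primeCompl M m = 0}
  add_mem' := by
    intro a b ha hb p hp hpV
    haveI := hp
    rw [map_add, ha p hp hpV, hb p hp hpV, add_zero]
  zero_mem' := by
    intro p hp hpV
    haveI := hp
    rw [map_zero]
  smul_mem' := by
    intro a m hm p hp hpV
    haveI := hp
    rw [IsLocalizedModule.eq_zero_iff p.primeCompl (LocalizedModule.mkLinearMap p.primeCompl M)]
    obtain ⟨s, hs⟩ := (IsLocalizedModule.eq_zero_iff p.primeCompl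
      (LocalizedModule.mkLinearMap p.primeCompl M)).mp (hm p hp hpV)
    refine ⟨s, ?_⟩
    have hs' : (s : R) • m = 0 := hs
    have hcomm : (s : R) • (a • m) = a • ((s : R) • m) := by
      rw [← smul_assoc, Algebra.smul_def, Algebra.commutes, mul_smul, algebraMap_smul]
    show (s : R) • (a • m) = 0
    rw [hcomm, hs', smul_zero]

theorem torsionSubmodule_injective_direct_summand
    [IsNoetherianRing R] [Module.Finite R A]
    (V : Set (Ideal R)) (hV : SpecializationClosed R V)
    (I : Type) [AddCommGroup I] [Module R I] [Module A I] [IsScalarTower R A I]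
    (hI : Module.Injective A I) :
    (∃ N : Submodule A I, IsCompl (torsionSubmodule R A V I) N) ∧
    Module.Injective A (torsionSubmodule R A V I) := by
  classical
  set Γ : Submodule A I := torsionSubmodule R A V I with hΓdef
  have memΓ : ∀ x : I, x ∈ Γ ↔ ∀ (p : Ideal R) (hp : p.IsPrime), p ∉ V →
      haveI := hp
      LocalizedModule.mkLinearMap p.primeCompl I x = 0 := fun x => Iff.rfl
  -- Step 1: Baer's criterion for Γ over A
  have baer : Module.Baer A Γ := by
    intro J f
    -- extend (the corestriction of) f to all of A using injectivity of I
    obtain ⟨g, hg⟩ := hI.out J.subtype (Submodule.injective_subtype J) (Γ.subtype.comp f)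
    set m : I := g 1 with hm
    have hjm : ∀ (j : A) (hj : j ∈ J), j • m = ((f ⟨j, hj⟩ : Γ) : I) := by
      intro j hj
      have h1 := hg ⟨j, hj⟩
      have h2 : g j = j • m := by
        rw [hm, ← map_smul, smul_eq_mul, mul_one]
      simpa [h2] using h1
    -- the R-linear "multiply by m" map
    set ℓ : A →ₗ[R] I :=
      { toFun := fun x => x • m
        map_add' := fun x y => add_smul x y m
        map_smul' := fun r x => smul_assoc r x m } with hℓdef
    set J' : Submodule R A := J.restrictScalars R with hJ'def
    set S : Submodule R I := J'.map ℓ with hSdef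
    have hSΓ : ∀ x ∈ S, x ∈ Γ := by
      rintro x ⟨j, hj, rfl⟩
      have : ℓ j = ((f ⟨j, hj⟩ : Γ) : I) := hjm j hj
      rw [this]
      exact (f ⟨j, hj⟩).2
    set a : Ideal R := S.annihilator with hadef
    have hann : ∀ s ∈ a, ∀ x ∈ S, s • x = 0 := fun s hs x hx =>
      Submodule.mem_annihilator.mp hs x hx
    -- the annihilator a is not contained in any prime outside V
    have hap : ∀ (p : Ideal R), p.IsPrime → p ∉ V → ∃ s ∈ a, s ∉ p := by
      intro p hp hpV
      have hfg : S.FG := (IsNoetherian.noetherian J').map ℓ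
      obtain ⟨T, hT⟩ := hfg
      have hTΓ : ∀ x ∈ T, x ∈ Γ := fun x hx =>
        hSΓ x (hT ▸ Submodule.subset_span hx)
      have hwit : ∀ x : T, ∃ s : p.primeCompl, (s : R) • (x : I) = 0 := by
        intro x
        exact (IsLocalizedModule.eq_zero_iff p.primeCompl
          (LocalizedModule.mkLinearMap p.primeCompl I)).mp
          ((memΓ x).mp (hTΓ x x.2) p hp hpV)
      choose sx hsx using hwit
      refine ⟨∏ x ∈ T.attach, (sx x : R), ?_, ?_⟩
      · rw [hadef, ← hT, Submodule.mem_annihilator_span]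
        intro n
        have hn : (⟨(n : I), n.2⟩ : T) ∈ T.attach := Finset.mem_attach _ _
        rw [← Finset.prod_erase_mul _ _ hn, mul_smul]
        rw [hsx ⟨(n : I), n.2⟩, smul_zero]
      · exact p.primeCompl.prod_mem (fun x _ => (sx x).2)
    -- Artin-Rees
    obtain ⟨k, hk⟩ := Ideal.exists_pow_inf_eq_pow_smul a J'
    have hAR : (a ^ (k + 1) • ⊤ ⊓ J' : Submodule R A) ≤ a • J' := by
      rw [hk (k + 1) (Nat.le_succ k), Nat.succ_sub le_rfl, Nat.sub_self, pow_one]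
      exact smul_mono_right _ inf_le_right
    have hkill : ∀ x ∈ (a • J' : Submodule R A), x • m = 0 := by
      intro x hx
      refine Submodule.smul_induction_on hx ?_ ?_
      · intro r hr n hn
        have : (r • n) • m = r • (n • m) := smul_assoc r n m
        rw [this]
        exact hann r hr (n • m) ⟨n, hn, rfl⟩
      · intro x y hx hy
        rw [add_smul, hx, hy, add_zero]
    -- the left ideal generated by a^(k+1)
    set L : Ideal A :=
      { carrier := (a ^ (k + 1) • (⊤ : Submodule R A) : Submodule R A)
        add_mem' := fun h1 h2 => Submodule.add_mem _ h1 h2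
        zero_mem' := Submodule.zero_mem _
        smul_mem' := by
          intro c x hx
          have : ∀ y ∈ (a ^ (k + 1) • (⊤ : Submodule R A) : Submodule R A),
              c * y ∈ (a ^ (k + 1) • (⊤ : Submodule R A) : Submodule R A) := by
            intro y hy
            refine Submodule.smul_induction_on hy ?_ ?_
            · intro r hr n _
              rw [mul_smul_comm]
              exact Submodule.smul_mem_smul hr trivial
            · intro u v hu hv
              rw [mul_add]; exact Submodule.add_mem _ hu hv
          exact this x hx } with hLdef
    have memL : ∀ x : A, x ∈ L ↔ x ∈ (a ^ (k + 1) • (⊤ : Submodule R A) : Submodule R A) :=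
      fun x => Iff.rfl
    -- set up the extension problem over A/L
    set u : ↥J →ₗ[A] A ⧸ L := L.mkQ.comp J.subtype with hudef
    set W : Submodule A ↥J := LinearMap.ker u with hWdef
    have hWker : W ≤ LinearMap.ker (Γ.subtype.comp f) := by
      intro j hj
      have hjL : (j : A) ∈ L := by
        have : L.mkQ (j : A) = 0 := hj
        exact (Submodule.Quotient.mk_eq_zero L).mp this
      have hjaJ : (j : A) ∈ (a • J' : Submodule R A) :=
        hAR ⟨(memL _).mp hjL, j.2⟩
      have : (j : A) • m = 0 := hkill _ hjaJ
      have : ((f j : Γ) : I) = 0 := by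
        rw [← hjm (j : A) j.2]; exact this
      simpa [LinearMap.mem_ker] using this
    set fbar : (↥J ⧸ W) →ₗ[A] I := W.liftQ (Γ.subtype.comp f) hWker with hfbardef
    set ubar : (↥J ⧸ W) →ₗ[A] A ⧸ L := W.liftQ u le_rfl with hubardef
    have hubar_inj : Function.Injective ubar := by
      rw [← LinearMap.ker_eq_bot]
      exact Submodule.ker_liftQ_eq_bot W u le_rfl le_rfl
    obtain ⟨G, hG⟩ := hI.out ubar hubar_inj fbar
    set m'' : I := G (L.mkQ 1) with hm''def
    have hGx : ∀ x : A, x • m'' = G (L.mkQ x) := by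
      intro x
      rw [hm''def, ← map_smul, ← map_smul, smul_eq_mul, mul_one]
    have hJm'' : ∀ (j : A) (hj : j ∈ J), j • m'' = ((f ⟨j, hj⟩ : Γ) : I) := by
      intro j hj
      have h1 : L.mkQ j = ubar (W.mkQ ⟨j, hj⟩) := by
        rw [hubardef]
        simp only [Submodule.mkQ_apply, Submodule.liftQ_apply]
        rfl
      rw [hGx j, h1, hG, hfbardef]
      simp only [Submodule.mkQ_apply, Submodule.liftQ_apply]
      rfl
    have hLm'' : ∀ x ∈ L, x • m'' = 0 := by
      intro x hx
      have h0 : L.mkQ x = 0 := by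
        rw [Submodule.mkQ_apply, Submodule.Quotient.mk_eq_zero]; exact hx
      rw [hGx x, h0, map_zero]
    have hm''Γ : m'' ∈ Γ := by
      rw [memΓ]
      intro p hp hpV
      obtain ⟨s, hsa, hsp⟩ := hap p hp hpV
      rw [IsLocalizedModule.eq_zero_iff p.primeCompl
        (LocalizedModule.mkLinearMap p.primeCompl I)]
      refine ⟨⟨s ^ (k + 1), pow_mem (show s ∈ p.primeCompl from hsp) _⟩, ?_⟩
      show (s ^ (k + 1) : R) • m'' = 0
      have h1 : (algebraMap R A (s ^ (k + 1))) ∈ L := by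
        rw [memL, Algebra.algebraMap_eq_smul_one]
        exact Submodule.smul_mem_smul (Ideal.pow_mem_pow hsa _) trivial
      calc (s ^ (k + 1) : R) • m'' = (algebraMap R A (s ^ (k + 1))) • m'' := by
            rw [algebraMap_smul]
        _ = 0 := hLm'' _ h1
    refine ⟨LinearMap.toSpanSingleton A Γ ⟨m'', hm''Γ⟩, ?_⟩
    intro x hx
    apply Subtype.ext
    show x • m'' = ((f ⟨x, hx⟩ : Γ) : I)
    exact hJm'' x hx
  have hinj : Module.Injective A Γ := baer.injective
  refine ⟨?_, hinj⟩
  -- Step 2: the splitting gives a complement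
  obtain ⟨π, hπ⟩ := hinj.out Γ.subtype (Submodule.injective_subtype Γ) LinearMap.id
  refine ⟨LinearMap.ker (Γ.subtype.comp π), ⟨?_, ?_⟩⟩
  · rw [disjoint_iff_inf_le]
    intro x ⟨hxΓ, hxN⟩
    have h1 : π x = ⟨x, hxΓ⟩ := by
      have := hπ ⟨x, hxΓ⟩
      simpa using this
    have h2 : Γ.subtype (π x) = 0 := hxN
    rw [h1] at h2
    simpa using h2
  · rw [codisjoint_iff_le_sup]
    intro x _
    have hmem : x - (π x : I) ∈ LinearMap.ker (Γ.subtype.comp π) := by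
      have h1 : π ((π x : I)) = π x := by
        have := hπ (π x)
        simpa using this
      simp [LinearMap.mem_ker, map_sub, h1]
    have : x = (π x : I) + (x - (π x : I)) := by abel
    rw [this]
    exact Submodule.add_mem_sup (π x).2 hmem


end
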